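/- Let (A, ≺) be a countable, very well founded partially ordered set and let c : ℕ → ℕ be a sequence in which every natural number appears infinitely often. Fix a bijection h : ℕ → A. Define a process that builds a sequence by, at step n, appending h(c n) to the output sequence if and only if h(c n) has not yet been appended and all ≺-predecessors of h(c n) have already been appended. Then every element of A is eventually appended to the output sequence. -/
import Mathlib


/-- The set of elements appended to the "good sequence" during the first `n` steps of the
greedy process: at step `n` the element `h (c n)` is appended iff it has not yet been
appended and all of its `r`-predecessors have already been appended. -/
def greedySet {A : Type*} (r : A → A → Prop) (h : ℕ → A) (c : ℕ → ℕ) : ℕ → Set A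
  | 0 => ∅
  | n + 1 =>
      greedySet r h c n ∪
        {a | a = h (c n) ∧ a ∉ greedySet r h c n ∧ ∀ b, r b a → b ∈ greedySet r h c n}

lemma greedySet_mono {A : Type*} (r : A → A → Prop) (h : ℕ → A) (c : ℕ → ℕ)
    {m n : ℕ} (hmn : m ≤ n) : greedySet r h c m ⊆ greedySet r h c n := by
  induction n with
  | zero => simp [Nat.le_zero.mp hmn]
  | succ n ih =>
    rcases Nat.lt_or_ge m (n+1) with hlt | hge
    · exact (ih (Nat.lt_succ_iff.mp hlt)).trans Set.subset_union_left
    · have : m = n + 1 := le_antisymm hmn hge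
      simp [this]

/-- For a countable, very well founded partially ordered set `(A, r)`, a bijection
`h : ℕ → A` and a sequence `c : ℕ → ℕ` in which every natural number appears infinitely
often, the greedy process appends every element of `A` eventually. -/
theorem greedy_process_total {A : Type*} [Countable A] (r : A → A → Prop)
    (hpo : IsStrictOrder A r)
    (hwf : ∀ a : A, {b : A | r b a}.Finite)
    (h : ℕ → A) (hbij : Function.Bijective h)
    (c : ℕ → ℕ) (hc : ∀ k N : ℕ, ∃ n ≥ N, c n = k) :
    ∀ a : A, ∃ n : ℕ, a ∈ greedySet r h c n := by
  classical
  -- measure: number of predecessors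
  set m : A → ℕ := fun a => (hwf a).toFinset.card with hm
  have hmlt : ∀ {b a : A}, r b a → m b < m a := by
    intro b a hba
    have hsub : (hwf b).toFinset ⊂ (hwf a).toFinset := by
      constructor
      · intro x hx
        simp only [Set.Finite.mem_toFinset, Set.mem_setOf_eq] at hx ⊢
        exact hpo.trans x b a hx hba
      · intro hcon
        have hb : b ∈ (hwf a).toFinset := by
          simp [Set.Finite.mem_toFinset, hba]
        have : b ∈ (hwf b).toFinset := hcon hb
        simp only [Set.Finite.mem_toFinset, Set.mem_setOf_eq] at this
        exact hpo.irrefl b this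
    exact Finset.card_lt_card hsub
  -- strong induction on the measure
  suffices H : ∀ k : ℕ, ∀ a : A, m a ≤ k → ∃ n : ℕ, a ∈ greedySet r h c n by
    intro a; exact H (m a) a le_rfl
  intro k
  induction k using Nat.strong_induction_on with
  | _ k ih =>
    intro a hma
    have ihpred : ∀ b, r b a → ∃ n, b ∈ greedySet r h c n := by
      intro b hba
      rcases Nat.eq_zero_or_pos k with rfl | hk
      · exact absurd (lt_of_lt_of_le (hmlt hba) hma) (Nat.not_lt_zero _)
      · exact ih (k-1) (Nat.sub_lt hk Nat.one_pos) b
          (Nat.le_sub_one_of_lt (lt_of_lt_of_le (hmlt hba) hma))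
    -- find a stage containing all predecessors
    set f : A → ℕ := fun b => if hb : r b a then (ihpred b hb).choose else 0 with hf
    set N : ℕ := (hwf a).toFinset.sup f with hN
    have hpredN : ∀ b, r b a → b ∈ greedySet r h c N := by
      intro b hb
      have h1 : b ∈ greedySet r h c (f b) := by
        simp only [hf, dif_pos hb]
        exact (ihpred b hb).choose_spec
      have h2 : f b ≤ N := Finset.le_sup (by simp [Set.Finite.mem_toFinset, hb])
      exact greedySet_mono r h c h2 h1
    -- find a step n ≥ N with h (c n) = a
    obtain ⟨n, hnN, hcn⟩ := hc (hbij.2 a).choose N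
    have hhcn : h (c n) = a := by rw [hcn]; exact (hbij.2 a).choose_spec
    by_cases hin : a ∈ greedySet r h c n
    · exact ⟨n, hin⟩
    · refine ⟨n + 1, Or.inr ?_⟩
      refine ⟨hhcn.symm, hin, ?_⟩
      intro b hb
      exact greedySet_mono r h c hnN (hpredN b hb)
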